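/- For every ε ∈ {1,−1} and every ν ∈ ℂ, the deformed module Π(ε,ν) is completely reducible: every subspace of V_ε invariant under the operators H, E, F of Π(ε,ν) admits a complementary subspace that is also invariant under H, E, F. -/

import Mathlib

namespace SL2Deform

/-- The index set `ℤ_ε = {j : ℤ | (-1)^j = ε}`, for a sign `ε ∈ {1, -1}`
(i.e. a unit of `ℤ`). -/
abbrev idx (ε : ℤˣ) : Type := {j : ℤ // (-1 : ℤˣ) ^ j = ε}

/-- `V ε`: the complex vector space of finitely supported functions on `ℤ_ε`,
with standard basis `{v_j}`. -/
abbrev V (ε : ℤˣ) : Type := idx ε →₀ ℂ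

/-- The standard basis vector `v_j` of `V ε`, for `j ∈ ℤ_ε`. -/
noncomputable def bv (ε : ℤˣ) (j : ℤ) (h : (-1 : ℤˣ) ^ j = ε) : V ε :=
  Finsupp.single ⟨j, h⟩ 1

lemma parity_two : (-1 : ℤˣ) ^ (2 : ℤ) = 1 := by decide
lemma parity_neg_two : (-1 : ℤˣ) ^ (-2 : ℤ) = 1 := by decide
lemma parity_zero : (-1 : ℤˣ) ^ (0 : ℤ) = 1 := by decide

lemma parity_shift {ε : ℤˣ} {j : ℤ} (h : (-1 : ℤˣ) ^ j = ε) {s : ℤ}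
    (hs : (-1 : ℤˣ) ^ s = 1) : (-1 : ℤˣ) ^ (j + s) = ε := by
  rw [zpow_add, h, hs, mul_one]

/-- If `m ∈ ℤ_{-ε}` then `m + 1 ∈ ℤ_ε`. -/
lemma parity_succ {ε : ℤˣ} {m : ℤ} (h : (-1 : ℤˣ) ^ m = -ε) :
    (-1 : ℤˣ) ^ (m + 1) = ε := by
  rw [zpow_add, h, zpow_one]
  simp

/-- If `m ∈ ℤ_{-ε}` then `m - 1 ∈ ℤ_ε`. -/
lemma parity_pred {ε : ℤˣ} {m : ℤ} (h : (-1 : ℤˣ) ^ m = -ε) :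
    (-1 : ℤˣ) ^ (m - 1) = ε := by
  rw [sub_eq_add_neg, zpow_add, h, zpow_neg, zpow_one]
  simp

/-- The linear operator on `V ε` sending `v_j` to `c j • v_{j+s}`,
for an even shift `s`. -/
noncomputable def shiftOp (ε : ℤˣ) (s : ℤ) (hs : (-1 : ℤˣ) ^ s = 1) (c : ℤ → ℂ) :
    V ε →ₗ[ℂ] V ε :=
  Finsupp.lsum ℂ fun j =>
    LinearMap.toSpanSingleton ℂ (V ε)
      (Finsupp.single ⟨j.1 + s, parity_shift j.2 hs⟩ (c j.1))

/-- `H v_j = j • v_j`. -/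
noncomputable def Hop (ε : ℤˣ) : V ε →ₗ[ℂ] V ε :=
  shiftOp ε 0 parity_zero fun j => (j : ℂ)

/-- Principal series: `E v_j = ½(ν + j + 1) • v_{j+2}`. -/
noncomputable def Eop (ε : ℤˣ) (ν : ℂ) : V ε →ₗ[ℂ] V ε :=
  shiftOp ε 2 parity_two fun j => (1 / 2 : ℂ) * (ν + j + 1)

/-- Principal series: `F v_j = ½(ν - j + 1) • v_{j-2}`. -/
noncomputable def Fop (ε : ℤˣ) (ν : ℂ) : V ε →ₗ[ℂ] V ε :=
  shiftOp ε (-2) parity_neg_two fun j => (1 / 2 : ℂ) * (ν - j + 1)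

/-- `f_m(ν) = ½ |ν²-m²|^{1/2} (ν+m)/|ν+m|` for `ν ≠ -m`, and `f_m(-m) = 0`. -/
noncomputable def fm (m : ℤ) (ν : ℂ) : ℂ :=
  if ν = -(m : ℂ) then 0
  else (1 / 2 : ℂ) * (Real.sqrt ‖ν ^ 2 - (m : ℂ) ^ 2‖ : ℝ) * (ν + m) /
    (‖ν + (m : ℂ)‖ : ℝ)

/-- Deformed module: `E v_{m-1} = f_m(ν) • v_{m+1}`, i.e. `E v_j = f_{j+1}(ν) • v_{j+2}`. -/
noncomputable def PEop (ε : ℤˣ) (ν : ℂ) : V ε →ₗ[ℂ] V ε :=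
  shiftOp ε 2 parity_two fun j => fm (j + 1) ν

/-- Deformed module: `F v_{m+1} = f_{-m}(ν) • v_{m-1}`, i.e. `F v_j = f_{-(j-1)}(ν) • v_{j-2}`. -/
noncomputable def PFop (ε : ℤˣ) (ν : ℂ) : V ε →ₗ[ℂ] V ε :=
  shiftOp ε (-2) parity_neg_two fun j => fm (1 - j) ν

/-- The module `π'(ε,ν)`: `E v_{m-1} = ½(ν - |m|) • v_{m+1}`,
i.e. `E v_j = ½(ν - |j+1|) • v_{j+2}`. -/
noncomputable def E'op (ε : ℤˣ) (ν : ℂ) : V ε →ₗ[ℂ] V ε :=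
  shiftOp ε 2 parity_two fun j => (1 / 2 : ℂ) * (ν - ((|j + 1| : ℤ) : ℂ))

/-- The module `π'(ε,ν)`: `F v_{m+1} = ½(ν + |m|) • v_{m-1}`,
i.e. `F v_j = ½(ν + |j-1|) • v_{j-2}`. -/
noncomputable def F'op (ε : ℤˣ) (ν : ℂ) : V ε →ₗ[ℂ] V ε :=
  shiftOp ε (-2) parity_neg_two fun j => (1 / 2 : ℂ) * (ν + ((|j - 1| : ℤ) : ℂ))

/-- `ν ∈ ℤ_{-ε}`: `ν` is an integer with `(-1)^ν = -ε`. -/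
def inZminus (ε : ℤˣ) (ν : ℂ) : Prop :=
  ∃ n : ℤ, ν = (n : ℂ) ∧ (-1 : ℤˣ) ^ n = -ε

section ModuleNotions

variable {M : Type*} [AddCommGroup M] [Module ℂ M]
variable {N : Type*} [AddCommGroup N] [Module ℂ N]

/-- `W` is a submodule for the module with operators `A, B, C`: it is invariant
under all three operators. -/
def Invariant (A B C : M →ₗ[ℂ] M) (W : Submodule ℂ M) : Prop :=
  (∀ x ∈ W, A x ∈ W) ∧ (∀ x ∈ W, B x ∈ W) ∧ (∀ x ∈ W, C x ∈ W)

/-- The module with operators `A, B, C` is irreducible: its only submodules are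
`0` and the whole space. -/
def IsIrreducibleRep (A B C : M →ₗ[ℂ] M) : Prop :=
  ∀ W : Submodule ℂ M, Invariant A B C W → W = ⊥ ∨ W = ⊤

/-- `W` is an irreducible submodule: invariant, nonzero, and with no nonzero
proper invariant subspace. -/
def IsIrreducibleSubmodule (A B C : M →ₗ[ℂ] M) (W : Submodule ℂ M) : Prop :=
  Invariant A B C W ∧ W ≠ ⊥ ∧
    ∀ U : Submodule ℂ M, Invariant A B C U → U ≤ W → U = ⊥ ∨ U = W

/-- The module with operators `A, B, C` is completely reducible: every invariant
subspace has an invariant complement. -/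
def CompletelyReducible (A B C : M →ₗ[ℂ] M) : Prop :=
  ∀ W : Submodule ℂ M, Invariant A B C W →
    ∃ U : Submodule ℂ M, Invariant A B C U ∧ IsCompl W U

/-- The two modules (given by operator triples) are isomorphic. -/
def Intertwined (A B C : M →ₗ[ℂ] M) (A' B' C' : N →ₗ[ℂ] N) : Prop :=
  ∃ e : M ≃ₗ[ℂ] N, (∀ x, e (A x) = A' (e x)) ∧ (∀ x, e (B x) = B' (e x)) ∧
    (∀ x, e (C x) = C' (e x))

/-- An invariant Hermitian form for the module with operators `A, B, C`
(`A` playing the role of `H`, `B` of `E`, `C` of `F`): a sesquilinear form,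
conjugate-symmetric, with `⟨Hv,w⟩ = ⟨v,Hw⟩`, `⟨Ev,w⟩ + ⟨v,Fw⟩ = 0`,
`⟨Fv,w⟩ + ⟨v,Ew⟩ = 0`. -/
structure IsInvHermForm (A B C : M →ₗ[ℂ] M) (Φ : M → M → ℂ) : Prop where
  add_left : ∀ u v w, Φ (u + v) w = Φ u w + Φ v w
  smul_left : ∀ (a : ℂ) (v w : M), Φ (a • v) w = a * Φ v w
  conj_symm : ∀ v w, Φ w v = (starRingEnd ℂ) (Φ v w)
  inv_A : ∀ v w, Φ (A v) w = Φ v (A w)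
  inv_BC : ∀ v w, Φ (B v) w + Φ v (C w) = 0
  inv_CB : ∀ v w, Φ (C v) w + Φ v (B w) = 0

end ModuleNotions

/-- `span{v_j : j ≥ n}`. -/
noncomputable def spanGE (ε : ℤˣ) (n : ℤ) : Submodule ℂ (V ε) :=
  Submodule.span ℂ {x : V ε | ∃ j : idx ε, n ≤ j.1 ∧ x = Finsupp.single j 1}

/-- `span{v_j : j ≤ n}`. -/
noncomputable def spanLE (ε : ℤˣ) (n : ℤ) : Submodule ℂ (V ε) :=
  Submodule.span ℂ {x : V ε | ∃ j : idx ε, j.1 ≤ n ∧ x = Finsupp.single j 1}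

/-- `span{v_j : |j| ≤ n}`. -/
noncomputable def spanAbsLE (ε : ℤˣ) (n : ℤ) : Submodule ℂ (V ε) :=
  Submodule.span ℂ {x : V ε | ∃ j : idx ε, |j.1| ≤ n ∧ x = Finsupp.single j 1}

/-- The diagonal operator `S v_j = c j • v_j`. -/
noncomputable def diagMap (ε : ℤˣ) (c : idx ε → ℂ) : V ε →ₗ[ℂ] V ε :=
  Finsupp.lsum ℂ fun j => LinearMap.toSpanSingleton ℂ (V ε) (Finsupp.single j (c j))

/-! ### Auxiliary lemmas for Statement 10 -/

lemma shiftOp_single (ε : ℤˣ) (s : ℤ) (hs : (-1 : ℤˣ) ^ s = 1) (c : ℤ → ℂ)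
    (j : idx ε) (a : ℂ) :
    shiftOp ε s hs c (Finsupp.single j a) =
      Finsupp.single ⟨j.1 + s, parity_shift j.2 hs⟩ (a * c j.1) := by
  simp [shiftOp, Finsupp.smul_single']

lemma single_index_congr {ε : ℤˣ} {a b : ℤ} (h : a = b) (ha : (-1 : ℤˣ) ^ a = ε)
    (hb : (-1 : ℤˣ) ^ b = ε) (c : ℂ) :
    (Finsupp.single (⟨a, ha⟩ : idx ε) c) = Finsupp.single ⟨b, hb⟩ c := by
  subst h; rfl

lemma Hop_single (ε : ℤˣ) (j : idx ε) (a : ℂ) :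
    Hop ε (Finsupp.single j a) = Finsupp.single j (a * (j.1 : ℂ)) := by
  rw [Hop, shiftOp_single]
  exact (single_index_congr (add_zero j.1) _ j.2 _).trans (by cases j; rfl)

lemma Hop_apply (ε : ℤˣ) (x : V ε) (k : idx ε) :
    Hop ε x k = x k * (k.1 : ℂ) := by
  induction x using Finsupp.induction_linear with
  | zero => simp
  | add f g hf hg => rw [map_add, Finsupp.add_apply, hf, hg, Finsupp.add_apply]; ring
  | single j a =>
    rw [Hop_single]
    rcases eq_or_ne j k with h | h
    · subst h; simp
    · simp [Finsupp.single_apply, h]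

/-- If `c ≠ 0` and `single j c ∈ W` then `single j 1 ∈ W`. -/
lemma single_one_mem {ε : ℤˣ} {W : Submodule ℂ (V ε)} {j : idx ε} {c : ℂ}
    (hc : c ≠ 0) (h : Finsupp.single j c ∈ W) : Finsupp.single j (1 : ℂ) ∈ W := by
  have := W.smul_mem c⁻¹ h
  rwa [Finsupp.smul_single', inv_mul_cancel₀ hc] at this

/-- Extraction of single components from an `H`-invariant subspace. -/
lemma single_comp_mem {ε : ℤˣ} {W : Submodule ℂ (V ε)}
    (hW : ∀ x ∈ W, Hop ε x ∈ W) :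
    ∀ x ∈ W, ∀ k, Finsupp.single k (x k) ∈ W := by
  suffices h : ∀ n : ℕ, ∀ x ∈ W, x.support.card ≤ n → ∀ k,
      Finsupp.single k (x k) ∈ W by
    exact fun x hx k => h x.support.card x hx le_rfl k
  intro n
  induction n with
  | zero =>
    intro x hx h0 k
    have : x = 0 := by
      rw [← Finsupp.support_eq_empty]
      exact Finset.card_eq_zero.mp (Nat.le_zero.mp h0)
    simp [this]
  | succ n ih =>
    intro x hx hcard k
    by_cases hk : x k = 0
    · rw [hk, Finsupp.single_zero]; exact W.zero_mem
    · have hkmem : k ∈ x.support := Finsupp.mem_support_iff.2 hk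
      set y : V ε := Hop ε x - (k.1 : ℂ) • x with hy
      have hyW : y ∈ W := W.sub_mem (hW x hx) (W.smul_mem _ hx)
      have hyc : ∀ m, y m = ((m.1 : ℂ) - (k.1 : ℂ)) * x m := by
        intro m
        rw [hy, Finsupp.sub_apply, Finsupp.smul_apply, Hop_apply, smul_eq_mul]
        ring
      have hsub : y.support ⊆ x.support.erase k := by
        intro m hm
        rw [Finsupp.mem_support_iff] at hm
        rcases eq_or_ne m k with rfl | hmk
        · exact absurd (by rw [hyc]; simp) hm
        · refine Finset.mem_erase.2 ⟨hmk, Finsupp.mem_support_iff.2 fun h0 => hm ?_⟩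
          rw [hyc, h0, mul_zero]
      have hycard : y.support.card ≤ n := by
        have := Finset.card_le_card hsub
        have h2 := Finset.card_erase_of_mem hkmem
        omega
      have hxm : ∀ m ∈ x.support.erase k, Finsupp.single m (x m) ∈ W := by
        intro m hm
        obtain ⟨hmk, _⟩ := Finset.mem_erase.mp hm
        have hne : ((m.1 : ℂ) - (k.1 : ℂ)) ≠ 0 := by
          have : m.1 ≠ k.1 := fun h => hmk (Subtype.ext h)
          intro h0
          apply this
          exact_mod_cast sub_eq_zero.mp h0
        have h1 : Finsupp.single m (y m) ∈ W := ih y hyW hycard m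
        rw [hyc] at h1
        have := W.smul_mem ((m.1 : ℂ) - (k.1 : ℂ))⁻¹ h1
        rwa [Finsupp.smul_single', inv_mul_cancel_left₀ hne] at this
      have hxeq : Finsupp.single k (x k) =
          x - ∑ m ∈ x.support.erase k, Finsupp.single m (x m) := by
        have hsum : ∑ m ∈ x.support, Finsupp.single m (x m) = x := by
          exact Finsupp.sum_single x
        rw [← Finset.add_sum_erase _ _ hkmem] at hsum
        rw [eq_sub_iff_add_eq, hsum]
      rw [hxeq]
      exact W.sub_mem hx (Submodule.sum_mem W hxm)

lemma fm_eq_zero_iff (m : ℤ) (ν : ℂ) : fm m ν = 0 ↔ ν ^ 2 = (m : ℂ) ^ 2 := by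
  unfold fm
  by_cases h : ν = -(m : ℂ)
  · rw [if_pos h, h]
    exact ⟨fun _ => by ring, fun _ => rfl⟩
  · rw [if_neg h]
    have hb : ν + (m : ℂ) ≠ 0 := fun hc => h (by linear_combination hc)
    have habs : ((‖ν + (m : ℂ)‖ : ℝ) : ℂ) ≠ 0 := by
      simpa [Complex.ofReal_eq_zero] using (norm_ne_zero_iff.mpr hb)
    rw [div_eq_zero_iff, or_iff_left habs, mul_eq_zero, or_iff_left hb,
      mul_eq_zero, or_iff_right (by norm_num : (1 / 2 : ℂ) ≠ 0),
      Complex.ofReal_eq_zero,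
      Real.sqrt_eq_zero (norm_nonneg _)]
    rw [show ((‖ν ^ 2 - (m : ℂ) ^ 2‖ : ℝ) = 0 ↔ ν ^ 2 - (m : ℂ) ^ 2 = 0)
      from norm_eq_zero, sub_eq_zero]

lemma fm_neg_ne_zero {m : ℤ} {ν : ℂ} (h : fm m ν ≠ 0) : fm (-m) ν ≠ 0 := by
  rw [Ne, fm_eq_zero_iff] at h ⊢
  push_cast
  rwa [neg_sq]

/-- Invariance of a `supported` submodule can be checked on basis vectors. -/
lemma supported_invariant {ε : ℤˣ} (T : Set (idx ε)) (A : V ε →ₗ[ℂ] V ε)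
    (h : ∀ j ∈ T, A (Finsupp.single j 1) ∈ Finsupp.supported ℂ ℂ T) :
    ∀ x ∈ Finsupp.supported ℂ ℂ T, A x ∈ Finsupp.supported ℂ ℂ T := by
  intro x hx
  rw [Finsupp.supported_eq_span_single] at hx
  have hmap : Submodule.map A
      (Submodule.span ℂ ((fun i => Finsupp.single i (1 : ℂ)) '' T)) ≤
      Finsupp.supported ℂ ℂ T := by
    rw [Submodule.map_span, Submodule.span_le]
    rintro y ⟨z, ⟨i, hi, rfl⟩, rfl⟩
    exact h i hi
  exact hmap ⟨x, hx, rfl⟩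

/-- For every `ε ∈ {1,-1}` and every `ν ∈ ℂ`, the deformed module
`Π(ε,ν)` is completely reducible: every subspace of `V ε` invariant under `H, E, F`
admits a complementary subspace that is also invariant under `H, E, F`. -/
theorem deformed_completely_reducible (ε : ℤˣ) (ν : ℂ) :
    CompletelyReducible (Hop ε) (PEop ε ν) (PFop ε ν) := by
  intro W hW
  obtain ⟨hH, hE, hF⟩ := hW
  set S : Set (idx ε) := {j | Finsupp.single j (1 : ℂ) ∈ W} with hS
  refine ⟨Finsupp.supported ℂ ℂ Sᶜ, ⟨?_, ?_, ?_⟩, ?_, ?_⟩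
  · -- H-invariance of the complement
    refine supported_invariant Sᶜ (Hop ε) fun j hj => ?_
    rw [Hop_single]
    exact Finsupp.single_mem_supported ℂ _ hj
  · -- E-invariance of the complement
    refine supported_invariant Sᶜ (PEop ε ν) fun j hj => ?_
    rw [PEop, shiftOp_single]
    by_cases hc : fm (j.1 + 1) ν = 0
    · rw [one_mul, hc, Finsupp.single_zero]; exact Submodule.zero_mem _
    · refine Finsupp.single_mem_supported ℂ _ ?_
      intro hmem
      apply hj
      have h1 : Finsupp.single (⟨j.1 + 2, parity_shift j.2 parity_two⟩ : idx ε)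
          (1 : ℂ) ∈ W := hmem
      have h2 := hF _ h1
      rw [PFop, shiftOp_single] at h2
      rw [show (1 : ℤ) - (j.1 + 2) = -(j.1 + 1) by ring] at h2
      rw [single_index_congr (show j.1 + 2 + -2 = j.1 by ring) _ j.2] at h2
      have hne : (1 : ℂ) * fm (-(j.1 + 1)) ν ≠ 0 := by
        rw [one_mul]
        exact fm_neg_ne_zero hc
      exact single_one_mem hne h2
  · -- F-invariance of the complement
    refine supported_invariant Sᶜ (PFop ε ν) fun j hj => ?_
    rw [PFop, shiftOp_single]
    by_cases hc : fm (1 - j.1) ν = 0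
    · rw [one_mul, hc, Finsupp.single_zero]; exact Submodule.zero_mem _
    · refine Finsupp.single_mem_supported ℂ _ ?_
      intro hmem
      apply hj
      have h1 : Finsupp.single (⟨j.1 + -2, parity_shift j.2 parity_neg_two⟩ : idx ε)
          (1 : ℂ) ∈ W := hmem
      have h2 := hE _ h1
      rw [PEop, shiftOp_single] at h2
      rw [show j.1 + -2 + 1 = -(1 - j.1) by ring] at h2
      rw [single_index_congr (show j.1 + -2 + 2 = j.1 by ring) _ j.2] at h2
      have hne : (1 : ℂ) * fm (-(1 - j.1)) ν ≠ 0 := by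
        rw [one_mul]
        exact fm_neg_ne_zero hc
      exact single_one_mem hne h2
  · -- disjointness
    rw [disjoint_iff, Submodule.eq_bot_iff]
    rintro x ⟨hxW, hxU⟩
    have hxU' : ↑x.support ⊆ Sᶜ := (Finsupp.mem_supported ℂ x).mp hxU
    rw [← Finsupp.support_eq_empty, Finset.eq_empty_iff_forall_notMem]
    intro m hm
    have hx0 : x m ≠ 0 := Finsupp.mem_support_iff.mp hm
    have h1 : Finsupp.single m (x m) ∈ W := single_comp_mem hH x hxW m
    have h2 : m ∈ S := single_one_mem hx0 h1
    exact hxU' hm h2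
  · -- codisjointness
    rw [codisjoint_iff, eq_top_iff]
    have h1 : Finsupp.supported ℂ ℂ S ≤ W := by
      rw [Finsupp.supported_eq_span_single, Submodule.span_le]
      rintro y ⟨i, hi, rfl⟩
      exact hi
    calc (⊤ : Submodule ℂ (V ε)) = Finsupp.supported ℂ ℂ (Set.univ : Set (idx ε)) :=
          Finsupp.supported_univ.symm
      _ = Finsupp.supported ℂ ℂ (S ∪ Sᶜ) := by rw [Set.union_compl_self]
      _ = Finsupp.supported ℂ ℂ S ⊔ Finsupp.supported ℂ ℂ Sᶜ :=
          Finsupp.supported_union S Sᶜ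
      _ ≤ W ⊔ Finsupp.supported ℂ ℂ Sᶜ := sup_le_sup_right h1 _
end SL2Deform
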